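/- arXiv:2111.02944 — 4 statements merged into one kernel-verified Lean document; each statement's English description precedes it below -/
import Mathlib

section
/- Let (X,d,m) be a metric measure space satisfying CD(0,∞) with positive volume entropy h := h(X,d,m) > 0. Then the constant h in the isoperimetric inequality m⁺(Ω) ≥ h·m(Ω) is sharp: for every C > h there exists a Borel set Ω ⊆ X with 0 < m(Ω) < ∞ such that m⁺(Ω) < C·m(Ω). -/
open MeasureTheory Metric Filter Set

/-- L²-Wasserstein distance between two measures, via couplings. -/
noncomputable def wassersteinDist {X : Type*} [MeasurableSpace X] [PseudoEMetricSpace X]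
    (μ ν : Measure X) : ENNReal :=
  (⨅ π : {π : Measure (X × X) // π.map Prod.fst = μ ∧ π.map Prod.snd = ν},
      ∫⁻ p, edist p.1 p.2 ^ 2 ∂(π : Measure (X × X))) ^ (1/2 : ℝ)

open Classical in
/-- Relative entropy `Ent_m(μ) = ∫ ρ log ρ dm` for `μ = ρ m`; `⊤` otherwise. -/
noncomputable def relEntropy {X : Type*} [MeasurableSpace X] (m μ : Measure X) : EReal :=
  if μ ≪ m ∧ Integrable (fun x => (μ.rnDeriv m x).toReal * Real.log (μ.rnDeriv m x).toReal) m
  then ((∫ x, (μ.rnDeriv m x).toReal * Real.log (μ.rnDeriv m x).toReal ∂m : ℝ) : EReal)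
  else ⊤

/-- CD(0,∞): displacement convexity of relative entropy along some W₂-geodesic. -/
def IsCD0Infty {X : Type*} [MeasurableSpace X] [PseudoEMetricSpace X] (m : Measure X) : Prop :=
  ∀ μ₀ μ₁ : Measure X, IsProbabilityMeasure μ₀ → IsProbabilityMeasure μ₁ →
    μ₀ ≪ m → μ₁ ≪ m →
    (∀ x₀ : X, ∫⁻ x, edist x x₀ ^ 2 ∂μ₀ ≠ ⊤) →
    (∀ x₀ : X, ∫⁻ x, edist x x₀ ^ 2 ∂μ₁ ≠ ⊤) →
    ∃ μ : ℝ → Measure X, μ 0 = μ₀ ∧ μ 1 = μ₁ ∧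
      (∀ t ∈ Icc (0:ℝ) 1, IsProbabilityMeasure (μ t)) ∧
      (∀ s ∈ Icc (0:ℝ) 1, ∀ t ∈ Icc (0:ℝ) 1,
        wassersteinDist (μ s) (μ t) = ENNReal.ofReal |s - t| * wassersteinDist μ₀ μ₁) ∧
      (∀ t ∈ Icc (0:ℝ) 1,
        relEntropy m (μ t) ≤ ((1 - t : ℝ) : EReal) * relEntropy m μ₀
          + ((t : ℝ) : EReal) * relEntropy m μ₁)

/-- Minkowski content via open ε-neighbourhoods. -/
noncomputable def minkowskiContent {X : Type*} [MeasurableSpace X] [PseudoEMetricSpace X]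
    (m : Measure X) (Z : Set X) : ENNReal :=
  liminf (fun ε : ℝ => (m (Metric.thickening ε Z) - m Z) / ENNReal.ofReal ε)
    (nhdsWithin 0 (Set.Ioi 0))

/-- The set of t-intermediate points between A and B. -/
def intermediatePoints {X : Type*} [PseudoMetricSpace X] (t : ℝ) (A B : Set X) : Set X :=
  {z | ∃ x ∈ A, ∃ y ∈ B, dist z x = t * dist x y ∧ dist z y = (1 - t) * dist x y}

private lemma exp_le_one_add_aux' {b c : ℝ} (hb : 0 < b) (hbc : b < c) :
    ∃ ε₀ > 0, ∀ ε : ℝ, 0 < ε → ε ≤ ε₀ → Real.exp (b * ε) ≤ 1 + c * ε := by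
  have hc : 0 < c := hb.trans hbc
  refine ⟨min (1 / (2 * b)) ((c - b) / (b * c)),
    lt_min (by positivity) (div_pos (by linarith) (by positivity)), fun ε hε hε₀ => ?_⟩
  have h1 : b * ε ≤ 1 / 2 := by
    have := le_trans hε₀ (min_le_left _ _)
    rw [le_div_iff₀ (by positivity)] at this
    nlinarith
  have h2 : b * c * ε ≤ c - b := by
    have := le_trans hε₀ (min_le_right _ _)
    rw [le_div_iff₀ (by positivity)] at this
    nlinarith
  have h3 : (0:ℝ) < 1 - b * ε := by nlinarith
  have h4 : 1 - b * ε ≤ Real.exp (-(b * ε)) := by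
    have := Real.add_one_le_exp (-(b * ε)); linarith
  have h5 : Real.exp (b * ε) ≤ 1 / (1 - b * ε) := by
    rw [le_div_iff₀ h3]
    calc Real.exp (b * ε) * (1 - b * ε) ≤ Real.exp (b * ε) * Real.exp (-(b * ε)) :=
          mul_le_mul_of_nonneg_left h4 (Real.exp_pos _).le
      _ = 1 := by rw [← Real.exp_add]; simp
  have h6 : 1 / (1 - b * ε) ≤ 1 + c * ε := by
    rw [div_le_iff₀ h3]; nlinarith
  exact h5.trans h6

/-- sharpness of the isoperimetric constant: for any `C > h` there is a
set violating the isoperimetric inequality with constant `C`. -/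
theorem isoperimetric_constant_sharp
    {X : Type*} [MetricSpace X] [MeasurableSpace X] [BorelSpace X] [Nonempty X]
    (m : Measure X) (hCD : IsCD0Infty m) (h : ENNReal) (hpos : 0 < h)
    (hent : ∀ x₀ : X, Tendsto
      (fun r : ℝ => ((Real.log (m (ball x₀ r)).toReal / r : ℝ) : EReal)) atTop (nhds (h : EReal)))
    (C : ENNReal) (hC : h < C) :
    ∃ Ω : Set X, MeasurableSet Ω ∧ 0 < m Ω ∧ m Ω ≠ ⊤ ∧
      minkowskiContent m Ω < C * m Ω := by
  by_contra hcon
  push_neg at hcon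
  obtain ⟨x₀⟩ := (inferInstance : Nonempty X)
  set φ : ℝ → ENNReal := fun r => m (ball x₀ r) with hφset
  have hφ : ∀ r, φ r = m (ball x₀ r) := fun r => rfl
  have hφmono : Monotone φ := fun a b hab => measure_mono (ball_subset_ball hab)
  have hE := hent x₀
  -- Step A: all balls have finite measure, and some ball has positive measure
  have hfin : ∀ r, φ r ≠ ⊤ := by
    intro r htop
    have h0 : Tendsto (fun r : ℝ => ((Real.log (m (ball x₀ r)).toReal / r : ℝ) : EReal))
        atTop (nhds ((0:ℝ) : EReal)) := by
      apply Tendsto.congr' _ tendsto_const_nhds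
      filter_upwards [eventually_ge_atTop r] with s hs
      have hts : φ s = ⊤ := top_le_iff.mp (htop ▸ hφmono hs)
      have : m (ball x₀ s) = ⊤ := hts
      rw [this]
      simp
    have := tendsto_nhds_unique h0 hE
    rw [show ((0:ℝ) : EReal) = ((0 : ENNReal) : EReal) by simp] at this
    exact hpos.ne' (EReal.coe_ennreal_eq_coe_ennreal_iff.mp this).symm
  have hex : ∃ r₀ : ℝ, 0 < φ r₀ := by
    by_contra hz
    push_neg at hz
    have h0 : Tendsto (fun r : ℝ => ((Real.log (m (ball x₀ r)).toReal / r : ℝ) : EReal))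
        atTop (nhds ((0:ℝ) : EReal)) := by
      apply Tendsto.congr' _ tendsto_const_nhds
      filter_upwards with s
      have : m (ball x₀ s) = 0 := le_antisymm (hz s) zero_le
      rw [this]
      simp
    have := tendsto_nhds_unique h0 hE
    rw [show ((0:ℝ) : EReal) = ((0 : ENNReal) : EReal) by simp] at this
    exact hpos.ne' (EReal.coe_ennreal_eq_coe_ennreal_iff.mp this).symm
  obtain ⟨r₀, hr₀⟩ := hex
  -- Step B: constants h < b < c < C
  obtain ⟨b, hhb, hbC⟩ := exists_between hC
  obtain ⟨c, hbc, hcC⟩ := exists_between hbC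
  have hbtop : b ≠ ⊤ := ne_top_of_lt hbc
  have hctop : c ≠ ⊤ := ne_top_of_lt hcC
  have hhtop : h ≠ ⊤ := ne_top_of_lt hhb
  set b' := b.toReal with hbb'
  set c' := c.toReal with hcc'
  have hb'pos : 0 < b' := ENNReal.toReal_pos (hpos.trans hhb).ne' hbtop
  have hb'c' : b' < c' := (ENNReal.toReal_lt_toReal hbtop hctop).mpr hbc
  have hc'pos : 0 < c' := hb'pos.trans hb'c'
  have hcofReal : c = ENNReal.ofReal c' := (ENNReal.ofReal_toReal hctop).symm
  obtain ⟨ε₀, hε₀pos, hexp⟩ := exp_le_one_add_aux' hb'pos hb'c'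
  -- Step C: local exponential growth
  have hgrow : ∀ r, r₀ ≤ r → ∃ δ > 0, ∀ ε, 0 < ε → ε < δ →
      ENNReal.ofReal (Real.exp (b' * ε)) * φ r ≤ φ (r + ε) := by
    intro r hr
    have hφr0 : 0 < φ r := lt_of_lt_of_le hr₀ (hφmono hr)
    have hφrtop := hfin r
    have hmink := hcon (ball x₀ r) measurableSet_ball (by rw [← hφ]; exact hφr0)
      (by rw [← hφ]; exact hφrtop)
    have h1 : c * φ r < C * φ r := by
      rw [mul_comm c, mul_comm C]
      exact (ENNReal.mul_lt_mul_iff_right hφr0.ne' hφrtop).mpr hcC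
    have h2 : c * φ r < liminf
        (fun ε : ℝ => (m (Metric.thickening ε (ball x₀ r)) - m (ball x₀ r)) / ENNReal.ofReal ε)
        (nhdsWithin 0 (Set.Ioi 0)) := by
      rw [hφ] at h1
      rw [hφ]
      exact lt_of_lt_of_le h1 hmink
    have h3 := eventually_lt_of_lt_liminf h2
    obtain ⟨u, hu, hsub⟩ := mem_nhdsGT_iff_exists_Ioo_subset.mp h3
    refine ⟨min u ε₀, lt_min hu hε₀pos, fun ε hε hεδ => ?_⟩
    have hkey := hsub ⟨hε, hεδ.trans_le (min_le_left _ _)⟩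
    have hthick : m (Metric.thickening ε (ball x₀ r)) ≤ φ (r + ε) := by
      rw [hφ]
      refine measure_mono fun z hz => ?_
      obtain ⟨y, hy, hyz⟩ := Metric.mem_thickening_iff.mp hz
      have : dist z x₀ < r + ε := by
        calc dist z x₀ ≤ dist z y + dist y x₀ := dist_triangle _ _ _
          _ < ε + r := add_lt_add hyz (mem_ball.mp hy)
          _ = r + ε := add_comm _ _
      exact mem_ball.mpr this
    have hkey2 : c * φ r < (φ (r + ε) - φ r) / ENNReal.ofReal ε := by
      refine lt_of_lt_of_le hkey (ENNReal.div_le_div_right ?_ _)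
      rw [hφ r]
      exact tsub_le_tsub_right hthick _
    have hε0' : ENNReal.ofReal ε ≠ 0 := by
      simp only [ne_eq, ENNReal.ofReal_eq_zero, not_le]; exact hε
    have h4 : c * φ r * ENNReal.ofReal ε < φ (r + ε) - φ r :=
      (ENNReal.lt_div_iff_mul_lt (Or.inl hε0') (Or.inl ENNReal.ofReal_ne_top)).mp hkey2
    have h5 : φ r + c * φ r * ENNReal.ofReal ε ≤ φ (r + ε) := by
      have h' := add_le_add_right h4.le (φ r)
      rwa [add_tsub_cancel_of_le (hφmono (by linarith))] at h'
    have h6 : ENNReal.ofReal (Real.exp (b' * ε)) ≤ 1 + c * ENNReal.ofReal ε := by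
      rw [hcofReal, ← ENNReal.ofReal_mul hc'pos.le, ← ENNReal.ofReal_one,
        ← ENNReal.ofReal_add zero_le_one (by positivity)]
      exact ENNReal.ofReal_le_ofReal (hexp ε hε (hεδ.trans_le (min_le_right _ _)).le)
    calc ENNReal.ofReal (Real.exp (b' * ε)) * φ r ≤ (1 + c * ENNReal.ofReal ε) * φ r :=
          mul_le_mul_left h6 _
      _ = φ r + c * φ r * ENNReal.ofReal ε := by ring
      _ ≤ φ (r + ε) := h5
  -- Step D: global exponential growth via continuous induction
  have hglobal : ∀ R, r₀ ≤ R → ENNReal.ofReal (Real.exp (b' * (R - r₀))) * φ r₀ ≤ φ R := by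
    intro R hR
    set P : ℝ → Prop := fun r => ENNReal.ofReal (Real.exp (b' * (r - r₀))) * φ r₀ ≤ φ r with hP
    have hP0 : P r₀ := by simp [hP]
    set A := {r | r ∈ Icc r₀ R ∧ ∀ s ∈ Icc r₀ r, P s} with hA
    have hA0 : r₀ ∈ A := ⟨⟨le_rfl, hR⟩, fun s hs => by
      have : s = r₀ := le_antisymm hs.2 hs.1
      rw [this]; exact hP0⟩
    have hAbdd : BddAbove A := ⟨R, fun r hr => hr.1.2⟩
    set t := sSup A with ht
    have htmem : t ∈ Icc r₀ R := ⟨le_csSup hAbdd hA0, csSup_le ⟨r₀, hA0⟩ fun r hr => hr.1.2⟩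
    have hPlt : ∀ s, r₀ ≤ s → s < t → P s := by
      intro s hs hst
      obtain ⟨a, haA, hsa⟩ := exists_lt_of_lt_csSup ⟨r₀, hA0⟩ hst
      exact haA.2 s ⟨hs, hsa.le⟩
    have hPt : P t := by
      rcases eq_or_lt_of_le htmem.1 with heq | hlt
      · rw [← heq]; exact hP0
      · obtain ⟨N, hN⟩ := exists_nat_one_div_lt (show (0:ℝ) < t - r₀ by linarith)
        have hloc : ∀ n : ℕ, N ≤ n →
            ENNReal.ofReal (Real.exp (b' * ((t - 1/(n+1)) - r₀))) * φ r₀ ≤ φ t := by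
          intro n hn
          have h1 : 1/((n:ℝ)+1) ≤ 1/((N:ℝ)+1) := by
            apply one_div_le_one_div_of_le (by positivity)
            exact_mod_cast add_le_add_left (Nat.cast_le.mpr hn) 1
          have hs1 : r₀ ≤ t - 1/(n+1) := by
            have : 1/((n:ℝ)+1) < t - r₀ := lt_of_le_of_lt h1 hN
            linarith
          have hs2 : t - 1/((n:ℝ)+1) < t := by
            have : 0 < 1/((n:ℝ)+1) := by positivity
            linarith
          exact le_trans (hPlt _ hs1 hs2) (hφmono hs2.le)
        have hlim : Tendsto
            (fun n : ℕ => ENNReal.ofReal (Real.exp (b' * ((t - 1/(n+1)) - r₀))) * φ r₀)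
            atTop (nhds (ENNReal.ofReal (Real.exp (b' * (t - r₀))) * φ r₀)) := by
          apply ENNReal.Tendsto.mul_const _ (Or.inr (hfin r₀))
          apply (ENNReal.continuous_ofReal.tendsto _).comp
          apply (Real.continuous_exp.tendsto _).comp
          have h0' : Tendsto (fun n : ℕ => t - 1/((n:ℝ)+1)) atTop (nhds t) := by
            have h0 : Tendsto (fun n : ℕ => 1/((n:ℝ)+1)) atTop (nhds 0) :=
              tendsto_one_div_add_atTop_nhds_zero_nat
            simpa using tendsto_const_nhds.sub h0
          have := (h0'.sub_const r₀).const_mul b'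
          simpa using this
        exact le_of_tendsto hlim (eventually_atTop.mpr ⟨N, hloc⟩)
    have htA : t ∈ A := ⟨htmem, fun s hs => by
      rcases eq_or_lt_of_le hs.2 with heq | hlt
      · rw [heq]; exact hPt
      · exact hPlt s hs.1 hlt⟩
    rcases eq_or_lt_of_le htmem.2 with heq | hlt
    · rw [← heq]; exact hPt
    · exfalso
      obtain ⟨δ, hδ, hstep⟩ := hgrow t htmem.1
      set ε := min (δ/2) (R - t) with hε
      have hεpos : 0 < ε := lt_min (by linarith) (by linarith)
      have hεδ : ε < δ := lt_of_le_of_lt (min_le_left _ _) (by linarith)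
      have hεR : t + ε ≤ R := by
        have := min_le_right (δ/2) (R - t)
        simp only [← hε] at this
        linarith
      have hmemA : t + ε ∈ A := by
        refine ⟨⟨by linarith [htmem.1], hεR⟩, fun s hs => ?_⟩
        rcases le_or_gt s t with hst | hts
        · exact htA.2 s ⟨hs.1, hst⟩
        · have hst2 : s - t < δ := by
            have := hs.2
            linarith [hεδ]
          have hstep' := hstep (s - t) (by linarith) hst2
          show P s
          calc ENNReal.ofReal (Real.exp (b' * (s - r₀))) * φ r₀
              = ENNReal.ofReal (Real.exp (b' * (s - t))) *
                (ENNReal.ofReal (Real.exp (b' * (t - r₀))) * φ r₀) := by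
                rw [← mul_assoc, ← ENNReal.ofReal_mul (Real.exp_pos _).le, ← Real.exp_add]
                ring_nf
            _ ≤ ENNReal.ofReal (Real.exp (b' * (s - t))) * φ t := mul_le_mul_right hPt _
            _ ≤ φ (t + (s - t)) := hstep'
            _ = φ s := by ring_nf
      have := le_csSup hAbdd hmemA
      rw [← ht] at this
      linarith
  -- Step E: contradiction with the volume entropy
  have hK : 0 < (φ r₀).toReal := ENNReal.toReal_pos hr₀.ne' (hfin r₀)
  set K := (φ r₀).toReal with hKdef
  have hlow : ∀ r, r₀ ≤ r → 0 < r →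
      (b' * (r - r₀) + Real.log K) / r ≤ Real.log (m (ball x₀ r)).toReal / r := by
    intro r hr hrpos
    rw [div_le_div_iff_of_pos_right hrpos]
    have h1 : Real.exp (b' * (r - r₀)) * K ≤ (φ r).toReal := by
      have h2 := ENNReal.toReal_mono (hfin r) (hglobal r hr)
      rwa [ENNReal.toReal_mul, ENNReal.toReal_ofReal (Real.exp_pos _).le] at h2
    have h3 := Real.log_le_log (by positivity) h1
    rw [Real.log_mul (Real.exp_ne_zero _) hK.ne', Real.log_exp] at h3
    rw [← hφ r]
    exact h3
  have hlb : Tendsto (fun r : ℝ => (b' * (r - r₀) + Real.log K) / r) atTop (nhds b') := by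
    have heq : (fun r : ℝ => (b' * (r - r₀) + Real.log K) / r)
        =ᶠ[atTop] fun r => b' + (Real.log K - b' * r₀) / r := by
      filter_upwards [eventually_gt_atTop 0] with r hr
      field_simp
      ring
    rw [tendsto_congr' heq]
    have h0 : Tendsto (fun r : ℝ => (Real.log K - b' * r₀) / r) atTop (nhds 0) :=
      tendsto_const_nhds.div_atTop tendsto_id
    simpa using tendsto_const_nhds.add h0
  have hhb' : h.toReal < b' := (ENNReal.toReal_lt_toReal hhtop hbtop).mpr hhb
  set m' := (h.toReal + b') / 2 with hm'
  have hm1 : h.toReal < m' := by rw [hm']; linarith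
  have hm2 : m' < b' := by rw [hm']; linarith
  have hhE : (h : EReal) < ((m' : ℝ) : EReal) := by
    have : (h : EReal) = ((h.toReal : ℝ) : EReal) := by
      conv_lhs => rw [← ENNReal.ofReal_toReal hhtop]
      rw [EReal.coe_ennreal_ofReal, max_eq_left ENNReal.toReal_nonneg]
    rw [this]
    exact_mod_cast hm1
  have hev1 := hE.eventually_lt_const hhE
  have hev2 := hlb.eventually_const_lt hm2
  obtain ⟨r, h1, h2, h3⟩ := (hev1.and (hev2.and (eventually_ge_atTop (max r₀ 1)))).exists
  have hrr₀ : r₀ ≤ r := le_trans (le_max_left _ _) h3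
  have hrpos : (0:ℝ) < r := lt_of_lt_of_le one_pos (le_trans (le_max_right _ _) h3)
  have h4 : Real.log (m (ball x₀ r)).toReal / r < m' := by exact_mod_cast h1
  have h5 := hlow r hrr₀ hrpos
  linarith
end

section
/- Let (X,d,m) be a metric measure space satisfying CD(0,∞) whose volume entropy vanishes, h(X,d,m) = 0. Then there is no constant C > 0 such that m⁺(Ω) ≥ C·m(Ω) holds for all Borel sets Ω ⊆ X with 0 < m(Ω) < ∞. -/
open MeasureTheory Metric Filter Set

lemma exp_le_one_add_two_mul {x : ℝ} (hx : 0 ≤ x) (hx2 : x ≤ Real.log 2) :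
    Real.exp x ≤ 1 + 2 * x := by
  have h1 : 1 - x ≤ Real.exp (-x) := by have := Real.add_one_le_exp (-x); linarith
  have h2 : (1 - x) * Real.exp x ≤ 1 := by
    have := mul_le_mul_of_nonneg_right h1 (Real.exp_nonneg x)
    rwa [← Real.exp_add, neg_add_cancel, Real.exp_zero] at this
  have h3 : Real.exp x ≤ 2 := by
    calc Real.exp x ≤ Real.exp (Real.log 2) := Real.exp_le_exp.mpr hx2
    _ = 2 := Real.exp_log (by norm_num)
  nlinarith [Real.exp_nonneg x]

lemma chain_lemma (c : ℝ) (hc : 0 ≤ c) (H : ℝ → ℝ) (a b : ℝ) (hab : a ≤ b)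
    (hpos : 0 < H a)
    (P1 : ∀ s t, a ≤ s → s ≤ t → H s * Real.exp (-(c * (t - s))) ≤ H t)
    (P2 : ∀ s, a ≤ s → s < b → ∃ δ > 0, ∀ ε, 0 < ε → ε < δ → H s ≤ H (s + ε)) :
    H a ≤ H b := by
  set T : Set ℝ := {s | s ∈ Icc a b ∧ H a ≤ H s} with hT
  have haT : a ∈ T := ⟨⟨le_refl a, hab⟩, le_refl _⟩
  have hTne : T.Nonempty := ⟨a, haT⟩
  have hTbdd : BddAbove T := ⟨b, fun s hs => hs.1.2⟩
  set s₀ := sSup T with hs₀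
  have hs₀a : a ≤ s₀ := le_csSup hTbdd haT
  have hs₀b : s₀ ≤ b := csSup_le hTne (fun s hs => hs.1.2)
  have hkey : H a ≤ H s₀ := by
    by_contra hcon
    push_neg at hcon
    have htd : Tendsto (fun η : ℝ => H a * Real.exp (-(c * η))) (nhdsWithin 0 (Ioi 0)) (nhds (H a)) := by
      have hc2 : Continuous (fun η : ℝ => H a * Real.exp (-(c * η))) := by continuity
      have h0 := hc2.tendsto 0
      simp only [mul_zero, neg_zero, Real.exp_zero, mul_one] at h0
      exact h0.mono_left nhdsWithin_le_nhds
    have hev : ∀ᶠ η in nhdsWithin (0:ℝ) (Ioi 0), H s₀ < H a * Real.exp (-(c * η)) :=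
      htd.eventually (eventually_gt_nhds hcon)
    obtain ⟨η, hlt, hη0⟩ := (hev.and self_mem_nhdsWithin).exists
    obtain ⟨s, hsT, hscl⟩ := exists_lt_of_lt_csSup hTne (show s₀ - η < s₀ by
      have : (0:ℝ) < η := hη0
      linarith)
    have hss₀ : s ≤ s₀ := le_csSup hTbdd hsT
    have h1 := P1 s s₀ hsT.1.1 hss₀
    have h2 : Real.exp (-(c * η)) ≤ Real.exp (-(c * (s₀ - s))) := by
      apply Real.exp_le_exp.mpr
      nlinarith
    have h3 : H a * Real.exp (-(c * η)) ≤ H s * Real.exp (-(c * (s₀ - s))) :=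
      mul_le_mul hsT.2 h2 (Real.exp_nonneg _) (le_trans hpos.le hsT.2)
    linarith
  rcases eq_or_lt_of_le hs₀b with heq | hlt
  · exact heq ▸ hkey
  · exfalso
    obtain ⟨δ, hδ0, hδ⟩ := P2 s₀ hs₀a hlt
    set ε := min (δ / 2) (b - s₀) with hε
    have hε0 : 0 < ε := lt_min (by linarith) (by linarith)
    have hεδ : ε < δ := lt_of_le_of_lt (min_le_left _ _) (by linarith)
    have hmem : s₀ + ε ∈ T := by
      refine ⟨⟨by linarith, ?_⟩, hkey.trans (hδ ε hε0 hεδ)⟩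
      have : ε ≤ b - s₀ := min_le_right _ _
      linarith
    have := le_csSup hTbdd hmem
    linarith

/-- if the volume entropy vanishes, no linear isoperimetric inequality
`m⁺(Ω) ≥ C m(Ω)` with `C > 0` can hold for all Borel sets of finite positive measure. -/
theorem no_linear_isoperimetry_of_zero_entropy
    {X : Type*} [MetricSpace X] [MeasurableSpace X] [BorelSpace X] [Nonempty X]
    (m : Measure X) (hCD : IsCD0Infty m)
    (hball : ∀ (x : X) (r : ℝ), 0 < r → 0 < m (ball x r) ∧ m (ball x r) ≠ ⊤)
    (hent : ∀ x₀ : X, Tendsto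
      (fun r : ℝ => ((Real.log (m (ball x₀ r)).toReal / r : ℝ) : EReal)) atTop
      (nhds (0 : EReal))) :
    ¬ ∃ C : ℝ, 0 < C ∧ ∀ Ω : Set X, MeasurableSet Ω → 0 < m Ω → m Ω ≠ ⊤ →
        ENNReal.ofReal C * m Ω ≤ minkowskiContent m Ω := by
  rintro ⟨C, hC, hiso⟩
  obtain ⟨x₀⟩ := ‹Nonempty X›
  set v : ℝ → ℝ := fun r => (m (ball x₀ r)).toReal with hv
  set c : ℝ := C / 4 with hcdef
  have hc0 : 0 < c := by positivity
  -- step 1: minkowski content of balls vs annuli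
  have hthick : ∀ r : ℝ, 0 < r → minkowskiContent m (ball x₀ r) ≤
      liminf (fun ε : ℝ => (m (ball x₀ (r + ε)) - m (ball x₀ r)) / ENNReal.ofReal ε)
        (nhdsWithin 0 (Ioi 0)) := by
    intro r hr
    refine liminf_le_liminf ?_ (by isBoundedDefault) (by isBoundedDefault)
    filter_upwards [self_mem_nhdsWithin] with ε hε
    gcongr
    intro z hz
    rw [Metric.mem_thickening_iff] at hz
    obtain ⟨y, hy, hzy⟩ := hz
    rw [mem_ball] at hy ⊢
    calc dist z x₀ ≤ dist z y + dist y x₀ := dist_triangle _ _ _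
      _ < ε + r := add_lt_add hzy hy
      _ = r + ε := add_comm _ _
  -- step 2: growth inequality
  have key : ∀ r : ℝ, 0 < r → ∃ δ > 0, ∀ ε : ℝ, 0 < ε → ε < δ →
      v r * (1 + C / 2 * ε) ≤ v (r + ε) := by
    intro r hr
    obtain ⟨hpos, hfin⟩ := hball x₀ r hr
    have hlt : ENNReal.ofReal (C / 2) * m (ball x₀ r) <
        liminf (fun ε : ℝ => (m (ball x₀ (r + ε)) - m (ball x₀ r)) / ENNReal.ofReal ε)
          (nhdsWithin 0 (Ioi 0)) := by
      refine lt_of_lt_of_le ?_ ((hiso _ measurableSet_ball hpos hfin).trans (hthick r hr))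
      exact ENNReal.mul_lt_mul_left hpos.ne' hfin
        (ENNReal.ofReal_lt_ofReal_iff hC |>.mpr (by linarith))
    have hev := eventually_lt_of_lt_liminf hlt
    obtain ⟨δ, hδ0, hδsub⟩ := mem_nhdsGT_iff_exists_Ioo_subset.mp hev
    refine ⟨δ, hδ0, fun ε hε0 hεδ => ?_⟩
    have hεmem := hδsub ⟨hε0, hεδ⟩
    have h1 : ENNReal.ofReal (C / 2) * m (ball x₀ r) * ENNReal.ofReal ε ≤
        m (ball x₀ (r + ε)) - m (ball x₀ r) := by
      rw [← ENNReal.le_div_iff_mul_le (Or.inl (ENNReal.ofReal_pos.mpr hε0).ne')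
        (Or.inl ENNReal.ofReal_ne_top)]
      exact le_of_lt hεmem
    have hmono : m (ball x₀ r) ≤ m (ball x₀ (r + ε)) :=
      measure_mono (ball_subset_ball (by linarith))
    have h1' : ENNReal.ofReal (C / 2) * m (ball x₀ r) * ENNReal.ofReal ε + m (ball x₀ r) ≤
        m (ball x₀ (r + ε)) := by
      rw [← tsub_add_cancel_of_le hmono]
      exact add_le_add_left h1 _
    replace h1 := h1'
    obtain ⟨hpos', hfin'⟩ := hball x₀ (r + ε) (by linarith)
    have h2 := ENNReal.toReal_mono hfin' h1
    rw [ENNReal.toReal_add (by finiteness) hfin, ENNReal.toReal_mul, ENNReal.toReal_mul,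
      ENNReal.toReal_ofReal (by linarith), ENNReal.toReal_ofReal hε0.le] at h2
    simp only [hv]
    nlinarith [h2]
  -- step 3: H is "locally increasing" and satisfies P1 on [1, ∞)
  set H : ℝ → ℝ := fun r => v r * Real.exp (-(c * r)) with hH
  have hvmono : ∀ s t : ℝ, 0 < s → s ≤ t → v s ≤ v t := by
    intro s t hs hst
    exact ENNReal.toReal_mono (hball x₀ t (lt_of_lt_of_le hs hst)).2
      (measure_mono (ball_subset_ball hst))
  have hv1pos : 0 < v 1 := ENNReal.toReal_pos (hball x₀ 1 one_pos).1.ne' (hball x₀ 1 one_pos).2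
  have P1 : ∀ s t : ℝ, (1:ℝ) ≤ s → s ≤ t → H s * Real.exp (-(c * (t - s))) ≤ H t := by
    intro s t hs hst
    have : H s * Real.exp (-(c * (t - s))) = v s * Real.exp (-(c * t)) := by
      simp only [hH]
      rw [mul_assoc, ← Real.exp_add]
      ring_nf
    rw [this]
    exact mul_le_mul_of_nonneg_right (hvmono s t (by linarith) hst) (Real.exp_nonneg _)
  have P2 : ∀ b : ℝ, ∀ s : ℝ, (1:ℝ) ≤ s → s < b → ∃ δ > 0, ∀ ε, 0 < ε → ε < δ → H s ≤ H (s + ε) := by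
    intro b s hs _
    obtain ⟨δ, hδ0, hδ⟩ := key s (by linarith)
    refine ⟨min δ (Real.log 2 / c), lt_min hδ0 (by positivity), fun ε hε0 hεδ => ?_⟩
    have hεδ' : ε < δ := lt_of_lt_of_le hεδ (min_le_left _ _)
    have hεlog : c * ε ≤ Real.log 2 := by
      have : ε < Real.log 2 / c := lt_of_lt_of_le hεδ (min_le_right _ _)
      rw [lt_div_iff₀ hc0] at this
      linarith [this]
    have hexp : Real.exp (c * ε) ≤ 1 + C / 2 * ε := by
      have := exp_le_one_add_two_mul (by positivity) hεlog
      have : Real.exp (c * ε) ≤ 1 + 2 * (c * ε) := this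
      have hcc : 2 * (c * ε) = C / 2 * ε := by rw [hcdef]; ring
      linarith [hcc ▸ this]
    have hkey := hδ ε hε0 hεδ'
    have hv0 : 0 ≤ v s := ENNReal.toReal_nonneg
    simp only [hH]
    calc v s * Real.exp (-(c * s))
        = v s * Real.exp (c * ε) * Real.exp (-(c * (s + ε))) := by
          rw [mul_assoc, ← Real.exp_add]; ring_nf
      _ ≤ v s * (1 + C / 2 * ε) * Real.exp (-(c * (s + ε))) := by
          apply mul_le_mul_of_nonneg_right _ (Real.exp_nonneg _)
          exact mul_le_mul_of_nonneg_left hexp hv0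
      _ ≤ v (s + ε) * Real.exp (-(c * (s + ε))) :=
          mul_le_mul_of_nonneg_right hkey (Real.exp_nonneg _)
  -- step 4: exponential growth
  have hgrow : ∀ r : ℝ, 1 ≤ r → H 1 ≤ H r := by
    intro r hr
    exact chain_lemma c hc0.le H 1 r hr (by positivity) P1 (P2 r)
  have hH1 : 0 < H 1 := by positivity
  -- step 5: contradict entropy zero
  have hev : ∀ᶠ r : ℝ in atTop, (c / 2 : ℝ) ≤ Real.log (m (ball x₀ r)).toReal / r := by
    have hR : ∃ R : ℝ, 1 ≤ R ∧ ∀ r : ℝ, R ≤ r → |Real.log (H 1)| ≤ c / 2 * r := by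
      refine ⟨max 1 (|Real.log (H 1)| * 2 / c), le_max_left _ _, fun r hr => ?_⟩
      have h1 : |Real.log (H 1)| * 2 / c ≤ r := le_trans (le_max_right _ _) hr
      rw [div_le_iff₀ hc0] at h1
      nlinarith [abs_nonneg (Real.log (H 1))]
    obtain ⟨R, hR1, hRprop⟩ := hR
    filter_upwards [eventually_ge_atTop R] with r hr
    have hr1 : (1:ℝ) ≤ r := le_trans hR1 hr
    have hr0 : (0:ℝ) < r := by linarith
    have h1 : H 1 * Real.exp (c * r) ≤ v r := by
      have h := mul_le_mul_of_nonneg_right (hgrow r hr1) (Real.exp_nonneg (c * r))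
      have e1 : H r * Real.exp (c * r) = v r := by
        simp only [hH]
        rw [mul_assoc, ← Real.exp_add, neg_add_cancel, Real.exp_zero, mul_one]
      rw [e1] at h
      exact h
    have hlog : Real.log (H 1 * Real.exp (c * r)) ≤ Real.log (v r) :=
      Real.log_le_log (by positivity) h1
    rw [Real.log_mul hH1.ne' (Real.exp_ne_zero _), Real.log_exp] at hlog
    have habs := hRprop r hr
    have h2 : -(c / 2 * r) ≤ Real.log (H 1) := by
      have := neg_abs_le (Real.log (H 1)); linarith
    show c / 2 ≤ Real.log (v r) / r
    rw [le_div_iff₀ hr0]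
    linarith
  have := ge_of_tendsto (hent x₀) (hev.mono fun r h => EReal.coe_le_coe_iff.mpr h)
  rw [← EReal.coe_zero, EReal.coe_le_coe_iff] at this
  linarith
end

section
/- Let f : (0,∞) → (0,∞) be nondecreasing and suppose there exists C > 0 such that for all 0 < ε < r and δ > 0: ln f(r) ≥ (δ+ε)/(r+δ) · ln f(ε) + (r−ε)/(r+δ) · ln f(r+δ), and suppose additionally (ln f(r+δ) − ln f(r))/δ ≥ C for all r, δ > 0. Then lim_{r→∞} (ln f(r))/r exists and C ≤ lim_{r→∞} (ln f(r))/r. -/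
open MeasureTheory Metric Filter Set

/-- real-analysis core of the sharpness argument. -/
theorem sharpness_real_core (f : ℝ → ℝ) (C : ℝ) (hC : 0 < C)
    (hpos : ∀ r : ℝ, 0 < r → 0 < f r)
    (hmono : ∀ r s : ℝ, 0 < r → r ≤ s → f r ≤ f s)
    (hconc : ∀ ε r δ : ℝ, 0 < ε → ε < r → 0 < δ →
      (δ + ε) / (r + δ) * Real.log (f ε) + (r - ε) / (r + δ) * Real.log (f (r + δ))
        ≤ Real.log (f r))
    (hgrow : ∀ r δ : ℝ, 0 < r → 0 < δ → C ≤ (Real.log (f (r + δ)) - Real.log (f r)) / δ) :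
    ∃ L : EReal, Tendsto (fun r : ℝ => ((Real.log (f r) / r : ℝ) : EReal)) atTop (nhds L) ∧
      (C : EReal) ≤ L := by
  set G : ℝ → ℝ := fun r => Real.log (f r) with hG
  set a : ℝ := G 1 with ha
  -- key inequality
  have key : ∀ r s : ℝ, 1 < r → r < s → (G s - a) / s ≤ (G r - a) / (r - 1) := by
    intro r s hr hs
    have hδ : 0 < s - r := by linarith
    have h := hconc 1 r (s - r) one_pos hr hδ
    have hsr : r + (s - r) = s := by ring
    rw [hsr] at h
    have hs0 : (0:ℝ) < s := by linarith
    have h' : (s - r + 1) / s * a + (r - 1) / s * G s ≤ G r := h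
    have e : (s - r + 1) / s * a + (r - 1) / s * a = a := by
      rw [← add_mul, ← add_div]
      field_simp
      ring
    have h1 : (r - 1) / s * (G s - a) ≤ G r - a := by
      rw [mul_sub]; linarith
    rw [div_le_div_iff₀ hs0 (by linarith : (0:ℝ) < r - 1)]
    calc (G s - a) * (r - 1) = ((r - 1) / s * (G s - a)) * s := by field_simp
      _ ≤ (G r - a) * s := mul_le_mul_of_nonneg_right h1 (le_of_lt hs0)
  set u : ℝ → ℝ := fun r => G r / r with hu
  -- lower bound: u s ≥ C + (a - C)/s for s > 1
  have lb : ∀ s : ℝ, 1 < s → C + (a - C) / s ≤ u s := by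
    intro s hs
    have hδ : 0 < s - 1 := by linarith
    have h := hgrow 1 (s - 1) one_pos hδ
    have hsr : 1 + (s - 1) = s := by ring
    rw [hsr] at h
    have hs0 : (0:ℝ) < s := by linarith
    have h' : C ≤ (G s - a) / (s - 1) := h
    rw [le_div_iff₀ hδ] at h'
    have e : C + (a - C) / s = (C * (s - 1) + a) / s := by field_simp; ring
    rw [e]
    have : u s = G s / s := rfl
    rw [this]
    gcongr
    linarith
  -- upper bound: u s ≤ (G 2 - a) + a/s for s > 2
  have ub : ∀ s : ℝ, 2 < s → u s ≤ (G 2 - a) + a / s := by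
    intro s hs
    have h := key 2 s (by norm_num) hs
    have hs0 : (0:ℝ) < s := by linarith
    norm_num at h
    have husr : u s = (G s - a) / s + a / s := by
      show G s / s = _
      field_simp
      ring
    rw [husr]
    linarith
  -- boundedness
  have hbdd_above : IsBoundedUnder (· ≤ ·) atTop u := by
    refine ⟨(G 2 - a) + |a|, eventually_map.2 ?_⟩
    filter_upwards [eventually_ge_atTop (3:ℝ)] with s hs
    have h := ub s (by linarith)
    have : a / s ≤ |a| := by
      calc a / s ≤ |a / s| := le_abs_self _
        _ = |a| / |s| := by rw [abs_div]
        _ ≤ |a| / 1 := by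
            apply div_le_div_of_nonneg_left (abs_nonneg a) one_pos
            rw [abs_of_pos (by linarith : (0:ℝ) < s)]; linarith
        _ = |a| := div_one _
    linarith
  have hbdd_below : IsBoundedUnder (· ≥ ·) atTop u := by
    refine ⟨C - |a - C|, eventually_map.2 ?_⟩
    filter_upwards [eventually_ge_atTop (2:ℝ)] with s hs
    have h := lb s (by linarith)
    have : -|a - C| ≤ (a - C) / s := by
      calc -|a - C| ≤ -|(a - C) / s| := by
            rw [neg_le_neg_iff, abs_div]
            calc |a - C| / |s| ≤ |a - C| / 1 := by
                  apply div_le_div_of_nonneg_left (abs_nonneg _) one_pos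
                  rw [abs_of_pos (by linarith : (0:ℝ) < s)]; linarith
              _ = |a - C| := div_one _
        _ ≤ (a - C) / s := neg_abs_le _
    show C - |a - C| ≤ u s
    linarith
  set Λ : ℝ := limsup u atTop with hΛ
  set ℓ : ℝ := liminf u atTop with hℓ
  -- C ≤ ℓ
  have hCl : C ≤ ℓ := by
    have htend : Tendsto (fun s : ℝ => C + (a - C) / s) atTop (nhds C) := by
      have : Tendsto (fun s : ℝ => (a - C) / s) atTop (nhds 0) :=
        tendsto_const_nhds.div_atTop tendsto_id
      simpa using tendsto_const_nhds.add this
    have := liminf_le_liminf (f := atTop)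
      (u := fun s : ℝ => C + (a - C) / s) (v := u)
      (by filter_upwards [eventually_gt_atTop (1:ℝ)] with s hs using lb s hs)
      htend.isBoundedUnder_ge hbdd_above.isCoboundedUnder_ge
    rwa [htend.liminf_eq] at this
  -- Λ ≤ (G r - a)/(r-1) for r > 1
  have hΛr : ∀ r : ℝ, 1 < r → Λ ≤ (G r - a) / (r - 1) := by
    intro r hr
    have htend : Tendsto (fun s : ℝ => (G r - a) / (r - 1) + a / s) atTop
        (nhds ((G r - a) / (r - 1))) := by
      have : Tendsto (fun s : ℝ => a / s) atTop (nhds 0) :=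
        tendsto_const_nhds.div_atTop tendsto_id
      simpa using tendsto_const_nhds.add this
    have hle : u ≤ᶠ[atTop] fun s : ℝ => (G r - a) / (r - 1) + a / s := by
      filter_upwards [eventually_gt_atTop (max r 1)] with s hs
      have hs1 : 1 < s := lt_of_le_of_lt (le_max_right r 1) hs
      have hsr : r < s := lt_of_le_of_lt (le_max_left r 1) hs
      have h := key r s hr hsr
      have hs0 : (0:ℝ) < s := by linarith
      have husr : u s = (G s - a) / s + a / s := by
        show G s / s = _
        field_simp
        ring
      rw [husr]
      linarith
    have := limsup_le_limsup hle hbdd_below.isCoboundedUnder_le htend.isBoundedUnder_le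
    rwa [htend.limsup_eq] at this
  -- ℓ ≥ Λ
  have hΛℓ : Λ ≤ ℓ := by
    have htend : Tendsto (fun r : ℝ => Λ * ((r - 1) / r) + a / r) atTop (nhds Λ) := by
      have h1 : Tendsto (fun r : ℝ => (r - 1) / r) atTop (nhds 1) := by
        have he : (fun r : ℝ => (r - 1) / r) =ᶠ[atTop] fun r => 1 - 1 / r := by
          filter_upwards [eventually_gt_atTop (0:ℝ)] with r hr
          field_simp
        rw [tendsto_congr' he]
        have : Tendsto (fun r : ℝ => 1 / r) atTop (nhds 0) :=
          tendsto_const_nhds.div_atTop tendsto_id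
        simpa using tendsto_const_nhds.sub this
      have h2 : Tendsto (fun r : ℝ => a / r) atTop (nhds 0) :=
        tendsto_const_nhds.div_atTop tendsto_id
      have h3 : Tendsto (fun r : ℝ => Λ * ((r - 1) / r) + a / r) atTop
          (nhds (Λ * 1 + 0)) := (h1.const_mul Λ).add h2
      simpa using h3
    have hle : (fun r : ℝ => Λ * ((r - 1) / r) + a / r) ≤ᶠ[atTop] u := by
      filter_upwards [eventually_gt_atTop (1:ℝ)] with r hr
      have h := hΛr r hr
      have hr0 : (0:ℝ) < r := by linarith
      have hr1 : (0:ℝ) < r - 1 := by linarith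
      rw [le_div_iff₀ hr1] at h
      have hur : u r = (G r - a) / r + a / r := by
        show G r / r = _
        field_simp
        ring
      rw [hur]
      have hkey : Λ * ((r - 1) / r) ≤ (G r - a) / r := by
        rw [mul_div_assoc']
        gcongr
      linarith
    have := liminf_le_liminf hle htend.isBoundedUnder_ge hbdd_above.isCoboundedUnder_ge
    rwa [htend.liminf_eq] at this
  have hℓΛ : ℓ ≤ Λ := liminf_le_limsup hbdd_above hbdd_below
  have htendsto : Tendsto u atTop (nhds ℓ) :=
    tendsto_of_liminf_eq_limsup rfl (le_antisymm hΛℓ hℓΛ) hbdd_above hbdd_below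
  exact ⟨(ℓ : EReal), EReal.tendsto_coe.mpr htendsto, by exact_mod_cast hCl⟩
end

section
/- Let (X,d,m) be a metric measure space satisfying CD(0,∞) in which some (equivalently every) ball has finite measure, and suppose that for some C > 0 the isoperimetric inequality m⁺(Ω) ≥ C·m(Ω) holds for all Borel sets Ω with 0 < m(Ω) < ∞. Then for every x₀ ∈ X, every r > 0 and δ > 0: ln m(B_{r+δ}(x₀)) − ln m(B_r(x₀)) ≥ C·δ. -/
open MeasureTheory Metric Filter Set

private lemma growth_aux {f : ℝ → ℝ} {a b c : ℝ} (hab : a ≤ b)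
    (hmono : ∀ x ∈ Set.Icc a b, ∀ y ∈ Set.Icc a b, x ≤ y → f x ≤ f y)
    (hslope : ∀ x ∈ Set.Ico a b, ∀ η : ℝ, 0 < η →
      ∃ z ∈ Set.Ioc x b, (c - η) * (z - x) ≤ f z - f x) :
    c * (b - a) ≤ f b - f a := by
  rcases eq_or_lt_of_le hab with rfl | hab'
  · simp
  have key : ∀ η : ℝ, 0 < η → (c - η) * (b - a) ≤ f b - f a := by
    intro η hη
    by_cases hcη : c - η ≤ 0
    · have h0 := hmono a ⟨le_rfl, hab⟩ b ⟨hab, le_rfl⟩ hab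
      nlinarith
    push_neg at hcη
    set S : Set ℝ := {x | x ∈ Set.Icc a b ∧ (c - η) * (x - a) ≤ f x - f a} with hS
    have haS : a ∈ S := ⟨⟨le_rfl, hab⟩, by simp⟩
    have hbdd : BddAbove S := ⟨b, fun x hx => hx.1.2⟩
    have hsmem : sSup S ∈ Set.Icc a b :=
      ⟨le_csSup hbdd haS, csSup_le ⟨a, haS⟩ (fun x hx => hx.1.2)⟩
    have hsS : (c - η) * (sSup S - a) ≤ f (sSup S) - f a := by
      have h1 : ∀ ε : ℝ, 0 < ε → (c - η) * (sSup S - a) ≤ f (sSup S) - f a + ε := by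
        intro ε hε
        obtain ⟨y, hyS, hy⟩ : ∃ y ∈ S, sSup S - ε / (c - η) < y := by
          apply exists_lt_of_lt_csSup ⟨a, haS⟩
          have : 0 < ε / (c - η) := div_pos hε hcη
          linarith
        have hyle : y ≤ sSup S := le_csSup hbdd hyS
        have hmle : f y ≤ f (sSup S) := hmono y hyS.1 (sSup S) hsmem hyle
        have h2 := hyS.2
        have h3 : (c - η) * (sSup S - a) < (c - η) * (y - a) + ε := by
          have := mul_lt_mul_of_pos_left hy hcη
          have h4 : (c - η) * (ε / (c - η)) = ε := mul_div_cancel₀ ε hcη.ne'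
          nlinarith
        linarith
      by_contra hcon
      push_neg at hcon
      have := h1 (((c - η) * (sSup S - a) - (f (sSup S) - f a)) / 2) (by linarith)
      linarith
    have hsb : sSup S = b := by
      by_contra hne
      have hslt : sSup S < b := lt_of_le_of_ne hsmem.2 hne
      obtain ⟨z, hz, hzs⟩ := hslope (sSup S) ⟨hsmem.1, hslt⟩ η hη
      have hzS : z ∈ S := by
        refine ⟨⟨le_trans hsmem.1 hz.1.le, hz.2⟩, ?_⟩
        nlinarith [hz.1.le]
      have := le_csSup hbdd hzS
      linarith [hz.1]
    rw [hsb] at hsS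
    exact hsS
  by_contra hcon
  push_neg at hcon
  have hd : 0 < c * (b - a) - (f b - f a) := by linarith
  have hba : 0 < b - a := by linarith
  have hkey := key ((c * (b - a) - (f b - f a)) / (2 * (b - a)))
    (div_pos hd (by linarith))
  have h5 : (c - (c * (b - a) - (f b - f a)) / (2 * (b - a))) * (b - a)
      = c * (b - a) - (c * (b - a) - (f b - f a)) / 2 := by
    field_simp
  linarith

private lemma log_one_add_ge {u : ℝ} (hu : 0 ≤ u) : u / (1 + u) ≤ Real.log (1 + u) := by
  have h1 : (0:ℝ) < 1 + u := by linarith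
  have h2 := Real.log_le_sub_one_of_pos (x := 1 / (1 + u)) (by positivity)
  rw [Real.log_div one_ne_zero h1.ne', Real.log_one] at h2
  have : 1 / (1 + u) - 1 = -(u / (1 + u)) := by field_simp; ring
  linarith [this ▸ h2]

/-- a linear isoperimetric inequality with constant `C` forces exponential
volume growth of balls at rate at least `C`. -/
theorem linear_isoperimetry_exponential_growth
    {X : Type*} [MetricSpace X] [MeasurableSpace X] [BorelSpace X]
    (m : Measure X) (hCD : IsCD0Infty m)
    (hball : ∀ (x : X) (r : ℝ), 0 < r → 0 < m (ball x r) ∧ m (ball x r) ≠ ⊤)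
    (C : ℝ) (hC : 0 < C)
    (hiso : ∀ Ω : Set X, MeasurableSet Ω → 0 < m Ω → m Ω ≠ ⊤ →
      ENNReal.ofReal C * m Ω ≤ minkowskiContent m Ω)
    (x₀ : X) (r δ : ℝ) (hr : 0 < r) (hδ : 0 < δ) :
    C * δ ≤ Real.log (m (ball x₀ (r + δ))).toReal - Real.log (m (ball x₀ r)).toReal := by
  set M : ℝ → ENNReal := fun x => m (ball x₀ x) with hM
  have hfin : ∀ x : ℝ, M x ≠ ⊤ := by
    intro x
    rcases le_or_gt x 0 with hx | hx
    · simp [hM, Metric.ball_eq_empty.2 hx]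
    · exact (hball x₀ x hx).2
  have hpos : ∀ x : ℝ, 0 < x → 0 < M x := fun x hx => (hball x₀ x hx).1
  have hMmono : ∀ x y : ℝ, x ≤ y → M x ≤ M y :=
    fun x y h => measure_mono (ball_subset_ball h)
  set F : ℝ → ℝ := fun x => Real.log (M x).toReal with hF
  have hkey : C * ((r + δ) - r) ≤ F (r + δ) - F r := by
    apply growth_aux (by linarith)
    · intro x hx y hy hxy
      exact Real.log_le_log (ENNReal.toReal_pos (hpos x (lt_of_lt_of_le hr hx.1)).ne'
        (hfin x)) (ENNReal.toReal_mono (hfin y) (hMmono x y hxy))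
    · intro x hx η hη
      have hx0 : 0 < x := lt_of_lt_of_le hr hx.1
      by_cases hcη : C - η ≤ 0
      · refine ⟨r + δ, ⟨hx.2, le_rfl⟩, ?_⟩
        have h0 : F x ≤ F (r + δ) := Real.log_le_log (ENNReal.toReal_pos (hpos x hx0).ne'
          (hfin x)) (ENNReal.toReal_mono (hfin (r + δ)) (hMmono x (r + δ) (by linarith [hx.2.le])))
        nlinarith [hx.2.le]
      push_neg at hcη
      obtain ⟨k, hk⟩ : ∃ k : ℝ, k = C - η / 2 := ⟨_, rfl⟩
      have hk0 : 0 < k := by rw [hk]; linarith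
      have hkC : k < C := by rw [hk]; linarith
      have hCk : C - η ≤ k := by rw [hk]; linarith
      -- isoperimetric inequality at ball x₀ x
      have hisoB := hiso (ball x₀ x) isOpen_ball.measurableSet (hpos x hx0) (hfin x)
      have hsub : ∀ ε : ℝ, Metric.thickening ε (ball x₀ x) ⊆ ball x₀ (x + ε) := by
        intro ε z hz
        rw [Metric.mem_thickening_iff] at hz
        obtain ⟨y, hy, hzy⟩ := hz
        rw [mem_ball] at hy ⊢
        calc dist z x₀ ≤ dist z y + dist y x₀ := dist_triangle _ _ _
          _ < ε + x := add_lt_add hzy hy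
          _ = x + ε := add_comm _ _
      have hlim : minkowskiContent m (ball x₀ x) ≤
          Filter.liminf (fun ε : ℝ => (M (x + ε) - M x) / ENNReal.ofReal ε)
            (nhdsWithin 0 (Set.Ioi 0)) := by
        exact Filter.liminf_le_liminf (Filter.Eventually.of_forall fun ε =>
          ENNReal.div_le_div_right (tsub_le_tsub_right (measure_mono (hsub ε)) _) _)
      have hlt : ENNReal.ofReal k * M x <
          Filter.liminf (fun ε : ℝ => (M (x + ε) - M x) / ENNReal.ofReal ε)
            (nhdsWithin 0 (Set.Ioi 0)) := by
        refine lt_of_lt_of_le ?_ (le_trans hisoB hlim)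
        rw [mul_comm, mul_comm (ENNReal.ofReal C)]
        exact ENNReal.mul_lt_mul_right (hpos x hx0).ne' (hfin x)
          (ENNReal.ofReal_lt_ofReal_iff hC |>.2 hkC)
      have hev := Filter.eventually_lt_of_lt_liminf hlt
      set T : ℝ := min (η / (2 * k ^ 2)) (r + δ - x) with hT
      have hT0 : 0 < T := lt_min (by positivity) (by linarith [hx.2])
      have hIoo : Set.Ioo (0:ℝ) T ∈ nhdsWithin (0:ℝ) (Set.Ioi 0) :=
        Ioo_mem_nhdsGT_of_mem ⟨le_rfl, hT0⟩
      obtain ⟨ε, hε1, hε2⟩ := (hev.and (Filter.eventually_of_mem hIoo (fun y hy => hy))).exists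
      obtain ⟨hε0, hεT⟩ := hε2
      -- convert the ENNReal inequality into a real one
      have hεne : ENNReal.ofReal ε ≠ 0 := (ENNReal.ofReal_pos.2 hε0).ne'
      have hle : ENNReal.ofReal k * M x * ENNReal.ofReal ε ≤ M (x + ε) - M x :=
        (ENNReal.le_div_iff_mul_le (Or.inl hεne) (Or.inl ENNReal.ofReal_ne_top)).1 hε1.le
      have hsubfin : M (x + ε) - M x ≠ ⊤ :=
        (lt_of_le_of_lt tsub_le_self (lt_top_iff_ne_top.2 (hfin (x + ε)))).ne
      have hreal := ENNReal.toReal_mono hsubfin hle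
      rw [ENNReal.toReal_mul, ENNReal.toReal_mul, ENNReal.toReal_ofReal hk0.le,
        ENNReal.toReal_ofReal hε0.le,
        ENNReal.toReal_sub_of_le (hMmono x (x + ε) (by linarith)) (hfin (x + ε))] at hreal
      set A : ℝ := (M (x + ε)).toReal with hA
      set B : ℝ := (M x).toReal with hB
      have hB0 : 0 < B := ENNReal.toReal_pos (hpos x hx0).ne' (hfin x)
      have hkBε : 0 ≤ k * B * ε := by positivity
      have hA0 : 0 < A := by linarith
      -- F (x+ε) - F x ≥ log (1 + k ε) ≥ (C - η) ε
      refine ⟨x + ε, ⟨by linarith, by linarith [lt_of_lt_of_le hεT (min_le_right _ _)]⟩, ?_⟩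
      have hlog : Real.log (1 + k * ε) ≤ F (x + ε) - F x := by
        have h1 : B * (1 + k * ε) ≤ A := by nlinarith
        have h2 : F (x + ε) - F x = Real.log (A / B) := by
          rw [Real.log_div hA0.ne' hB0.ne']
        rw [h2]
        apply Real.log_le_log (by positivity)
        rw [le_div_iff₀ hB0]
        linarith [h1]
      have hεsmall : ε ≤ η / (2 * k ^ 2) := (lt_of_lt_of_le hεT (min_le_left _ _)).le
      have hfinal : (C - η) * ε ≤ Real.log (1 + k * ε) := by
        have h3 := log_one_add_ge (u := k * ε) (by positivity)
        have h4 : (C - η) * ε ≤ k * ε / (1 + k * ε) := by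
          rw [le_div_iff₀ (by positivity)]
          have h5 : k ^ 2 * ε ≤ η / 2 := by
            have h6 := mul_le_mul_of_nonneg_left hεsmall (sq_nonneg k)
            have h7 : k ^ 2 * (η / (2 * k ^ 2)) = η / 2 := by
              field_simp
            linarith
          have e1 : (C - η) * (k * (ε * ε)) ≤ k * (k * (ε * ε)) :=
            mul_le_mul_of_nonneg_right hCk (by positivity)
          have e3 : k ^ 2 * ε * ε ≤ η / 2 * ε := mul_le_mul_of_nonneg_right h5 hε0.le
          nlinarith [e1, e3, hk]
        linarith
      have : (C - η) * ((x + ε) - x) = (C - η) * ε := by ring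
      rw [this]
      linarith
  have : C * ((r + δ) - r) = C * δ := by ring
  rw [this] at hkey
  exact hkey
end
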